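/- For each k let Σ̇_k be an arbitrary n_k × n_k real symmetric matrix, set Σ̇^k = Σ_1 ⊗ ⋯ ⊗ Σ̇_k ⊗ ⋯ ⊗ Σ_r (the k-th factor replaced) and W_k = Σ̇^k Q. Then: (i) tr W_k = n_{(k)} tr(Σ̇_kΣ_k^{-1}) − tr(Σ̇_kΦ_k); (ii) tr(W_k²) = n_{(k)} tr((Σ̇_kΣ_k^{-1})²) + tr((Σ̇_kΦ_k)²) − 2 tr(Σ̇_kΣ_k^{-1}Σ̇_kΦ_k); (iii) for i ≠ j, tr(W_iW_j) = (∏_{l≠i,j} n_l) · tr(Σ̇_iΣ_i^{-1}) tr(Σ̇_jΣ_j^{-1}) − tr(Σ̇_iΦ_i) tr(Σ̇_jΦ_j). -/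

import Mathlib

open Matrix Finset

/-- The `r`-fold Kronecker product, realized entrywise on the product index type. -/
def kron {r : ℕ} (ns : Fin r → ℕ)
    (M : (k : Fin r) → Matrix (Fin (ns k)) (Fin (ns k)) ℝ) :
    Matrix ((k : Fin r) → Fin (ns k)) ((k : Fin r) → Fin (ns k)) ℝ :=
  Matrix.of fun i j => ∏ k, M k (i k) (j k)

/-- Q = S⁻¹ − S⁻¹X(X'S⁻¹X)⁻¹X'S⁻¹ for a column vector X. -/
noncomputable def Qmat {ι : Type*} [Fintype ι] [DecidableEq ι]
    (S : Matrix ι ι ℝ) (X : ι → ℝ) : Matrix ι ι ℝ :=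
  S⁻¹ - (X ⬝ᵥ S⁻¹.mulVec X)⁻¹ • (S⁻¹ * vecMulVec X X * S⁻¹)

/-- Φ = S⁻¹X(X'S⁻¹X)⁻¹X'S⁻¹ for a column vector X. -/
noncomputable def Phi {m : ℕ} (S : Matrix (Fin m) (Fin m) ℝ) (X : Fin m → ℝ) :
    Matrix (Fin m) (Fin m) ℝ :=
  (X ⬝ᵥ S⁻¹.mulVec X)⁻¹ • (S⁻¹ * vecMulVec X X * S⁻¹)

/-- Wₖ = Σ̇ᵏ·Q, where Σ̇ᵏ is the Kronecker product with the k-th factor replaced by Σ̇ₖ. -/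
noncomputable def Wmat {r : ℕ} (ns : Fin r → ℕ)
    (Ss Sd : (k : Fin r) → Matrix (Fin (ns k)) (Fin (ns k)) ℝ)
    (Xs : (k : Fin r) → Fin (ns k) → ℝ) (k : Fin r) :
    Matrix ((k : Fin r) → Fin (ns k)) ((k : Fin r) → Fin (ns k)) ℝ :=
  kron ns (Function.update Ss k (Sd k)) * Qmat (kron ns Ss) (fun i => ∏ l, Xs l (i l))

section kronlemmas
variable {r : ℕ} {ns : Fin r → ℕ}

lemma kron_mul (A B : (k : Fin r) → Matrix (Fin (ns k)) (Fin (ns k)) ℝ) :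
    kron ns A * kron ns B = kron ns (fun k => A k * B k) := by
  ext i j
  simp only [kron, Matrix.mul_apply, Matrix.of_apply]
  rw [Fintype.prod_sum]
  exact Finset.sum_congr rfl fun x _ => (Finset.prod_mul_distrib).symm

lemma kron_one : kron ns (fun _ => (1 : Matrix _ _ ℝ)) = 1 := by
  ext i j
  simp only [kron, Matrix.of_apply, Matrix.one_apply]
  by_cases h : i = j
  · simp [h]
  · obtain ⟨k, hk⟩ := Function.ne_iff.mp h
    rw [if_neg h]
    exact Finset.prod_eq_zero (Finset.mem_univ k) (by simp [hk])

lemma trace_kron (M : (k : Fin r) → Matrix (Fin (ns k)) (Fin (ns k)) ℝ) :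
    (kron ns M).trace = ∏ k, (M k).trace := by
  simp only [Matrix.trace, Matrix.diag, kron, Matrix.of_apply]
  rw [Fintype.prod_sum]

lemma kron_smul (c : Fin r → ℝ) (M : (k : Fin r) → Matrix (Fin (ns k)) (Fin (ns k)) ℝ) :
    kron ns (fun k => c k • M k) = (∏ k, c k) • kron ns M := by
  ext i j
  simp [kron, Finset.prod_mul_distrib]

end kronlemmas

section factor
variable {ι : Type*} [Fintype ι] [DecidableEq ι] (A : Matrix ι ι ℝ) (X : ι → ℝ)

lemma trace_vecMulVec_mul : (vecMulVec X X * A).trace = X ⬝ᵥ A.mulVec X := by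
  simp only [Matrix.trace, Matrix.diag, Matrix.mul_apply, vecMulVec_apply, dotProduct,
    Matrix.mulVec, dotProduct]
  rw [Finset.sum_comm]
  exact Finset.sum_congr rfl fun j _ => by
    rw [Finset.mul_sum]; exact Finset.sum_congr rfl fun i _ => by ring

lemma vmv_mul_vmv : vecMulVec X X * A * vecMulVec X X = (X ⬝ᵥ A.mulVec X) • vecMulVec X X := by
  ext i j
  simp only [Matrix.mul_apply, vecMulVec_apply, Matrix.smul_apply, dotProduct, Matrix.mulVec,
    dotProduct, smul_eq_mul, Finset.mul_sum, Finset.sum_mul]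
  rw [Finset.sum_comm]
  exact Finset.sum_congr rfl fun a _ => Finset.sum_congr rfl fun b _ => by ring

variable {m : ℕ} {S : Matrix (Fin m) (Fin m) ℝ} {Y : Fin m → ℝ}

lemma c_pos (hS : S.PosDef) (hY : Y ≠ 0) : 0 < Y ⬝ᵥ S⁻¹.mulVec Y := by
  simpa using hS.inv.dotProduct_mulVec_pos hY

lemma Phi_S_Phi (hS : S.PosDef) (hY : Y ≠ 0) : Phi S Y * S * Phi S Y = Phi S Y := by
  have hd : IsUnit S.det := hS.det_pos.ne'.isUnit
  have h1 : S⁻¹ * S = 1 := Matrix.nonsing_inv_mul S hd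
  have hc : (Y ⬝ᵥ S⁻¹.mulVec Y) ≠ 0 := (c_pos hS hY).ne'
  set c := Y ⬝ᵥ S⁻¹.mulVec Y with hcdef
  set M := S⁻¹ * vecMulVec Y Y * S⁻¹ with hM
  have key : M * S * M = c • M := by
    calc M * S * M = S⁻¹ * (vecMulVec Y Y * (S⁻¹ * S) * (S⁻¹ * vecMulVec Y Y * S⁻¹)) := by
          rw [hM]; noncomm_ring
      _ = S⁻¹ * (vecMulVec Y Y * S⁻¹ * vecMulVec Y Y) * S⁻¹ := by rw [h1]; noncomm_ring
      _ = c • M := by rw [vmv_mul_vmv, hM]; simp [Matrix.mul_smul, Matrix.smul_mul]; rfl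
  show (c⁻¹ • M) * S * (c⁻¹ • M) = c⁻¹ • M
  rw [Matrix.smul_mul, Matrix.smul_mul, Matrix.mul_smul, key, smul_smul, smul_smul]
  congr 1
  field_simp

lemma trace_S_Phi (hS : S.PosDef) (hY : Y ≠ 0) : (S * Phi S Y).trace = 1 := by
  have hd : IsUnit S.det := hS.det_pos.ne'.isUnit
  have h1 : S * S⁻¹ = 1 := Matrix.mul_nonsing_inv S hd
  have hc : (Y ⬝ᵥ S⁻¹.mulVec Y) ≠ 0 := (c_pos hS hY).ne'
  have h2 : S * Phi S Y = (Y ⬝ᵥ S⁻¹.mulVec Y)⁻¹ • (vecMulVec Y Y * S⁻¹) := by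
    rw [Phi, Matrix.mul_smul]
    congr 1
    calc S * (S⁻¹ * vecMulVec Y Y * S⁻¹) = (S * S⁻¹) * (vecMulVec Y Y * S⁻¹) := by noncomm_ring
      _ = vecMulVec Y Y * S⁻¹ := by rw [h1, one_mul]
  rw [h2, Matrix.trace_smul, trace_vecMulVec_mul, smul_eq_mul, inv_mul_cancel₀ hc]

end factor

section Qdecomp
variable {r : ℕ} {ns : Fin r → ℕ}

lemma kron_inv (Ss : (k : Fin r) → Matrix (Fin (ns k)) (Fin (ns k)) ℝ)
    (hSs : ∀ k, (Ss k).PosDef) :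
    (kron ns Ss)⁻¹ = kron ns (fun k => (Ss k)⁻¹) := by
  apply Matrix.inv_eq_right_inv
  rw [kron_mul]
  have : (fun k => Ss k * (Ss k)⁻¹) = fun _ => (1 : Matrix _ _ ℝ) := by
    funext k
    exact Matrix.mul_nonsing_inv _ (hSs k).det_pos.ne'.isUnit
  rw [this, kron_one]

lemma Q_eq_kron (Ss : (k : Fin r) → Matrix (Fin (ns k)) (Fin (ns k)) ℝ)
    (hSs : ∀ k, (Ss k).PosDef) (Xs : (k : Fin r) → Fin (ns k) → ℝ) :
    Qmat (kron ns Ss) (fun i => ∏ l, Xs l (i l))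
      = kron ns (fun k => (Ss k)⁻¹) - kron ns (fun k => Phi (Ss k) (Xs k)) := by
  set X : ((k : Fin r) → Fin (ns k)) → ℝ := fun i => ∏ l, Xs l (i l) with hX
  have hinv := kron_inv Ss hSs
  have hvmv : vecMulVec X X = kron ns (fun k => vecMulVec (Xs k) (Xs k)) := by
    ext i j
    simp [kron, vecMulVec_apply, hX, Finset.prod_mul_distrib]
  have hc : X ⬝ᵥ (kron ns Ss)⁻¹.mulVec X = ∏ k, Xs k ⬝ᵥ (Ss k)⁻¹.mulVec (Xs k) := by
    rw [← trace_vecMulVec_mul, hvmv, hinv, kron_mul, trace_kron]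
    exact Finset.prod_congr rfl fun k _ => trace_vecMulVec_mul _ _
  rw [Qmat, hc, hinv, hvmv, kron_mul, kron_mul]
  congr 1
  rw [← prod_inv_distrib, ← kron_smul]
  congr 1

lemma prod_split_one {r : ℕ} (k : Fin r) (f c : Fin r → ℝ)
    (h : ∀ l ∈ Finset.univ.erase k, f l = c l) :
    ∏ l, f l = f k * ∏ l ∈ Finset.univ.erase k, c l := by
  rw [← Finset.mul_prod_erase Finset.univ f (Finset.mem_univ k)]
  exact congrArg _ (Finset.prod_congr rfl h)

lemma prod_split_two {r : ℕ} (i j : Fin r) (hij : i ≠ j) (f c : Fin r → ℝ)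
    (h : ∀ l ∈ (Finset.univ.erase i).erase j, f l = c l) :
    ∏ l, f l = f i * (f j * ∏ l ∈ (Finset.univ.erase i).erase j, c l) := by
  rw [← Finset.mul_prod_erase Finset.univ f (Finset.mem_univ i),
      ← Finset.mul_prod_erase (Finset.univ.erase i) f
        (Finset.mem_erase.mpr ⟨hij.symm, Finset.mem_univ j⟩)]
  exact congrArg _ (congrArg _ (Finset.prod_congr rfl h))

end Qdecomp

/-- trace formulas for Wₖ. -/
theorem trace_formulas_W
    (r : ℕ) (hr : 2 ≤ r) (ns : Fin r → ℕ)
    (Ss : (k : Fin r) → Matrix (Fin (ns k)) (Fin (ns k)) ℝ)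
    (hSs : ∀ k, (Ss k).PosDef)
    (Xs : (k : Fin r) → Fin (ns k) → ℝ) (hXs : ∀ k, Xs k ≠ 0)
    (Sd : (k : Fin r) → Matrix (Fin (ns k)) (Fin (ns k)) ℝ)
    (hSd : ∀ k, (Sd k).IsSymm) :
    (∀ k, (Wmat ns Ss Sd Xs k).trace
        = ((∏ i ∈ Finset.univ.erase k, ns i : ℕ) : ℝ) * (Sd k * (Ss k)⁻¹).trace
          - (Sd k * Phi (Ss k) (Xs k)).trace) ∧
    (∀ k, (Wmat ns Ss Sd Xs k * Wmat ns Ss Sd Xs k).trace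
        = ((∏ i ∈ Finset.univ.erase k, ns i : ℕ) : ℝ) *
            (Sd k * (Ss k)⁻¹ * (Sd k * (Ss k)⁻¹)).trace
          + (Sd k * Phi (Ss k) (Xs k) * (Sd k * Phi (Ss k) (Xs k))).trace
          - 2 * (Sd k * (Ss k)⁻¹ * Sd k * Phi (Ss k) (Xs k)).trace) ∧
    (∀ i j, i ≠ j →
      (Wmat ns Ss Sd Xs i * Wmat ns Ss Sd Xs j).trace
        = ((∏ l ∈ (Finset.univ.erase i).erase j, ns l : ℕ) : ℝ) *
            ((Sd i * (Ss i)⁻¹).trace * (Sd j * (Ss j)⁻¹).trace)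
          - (Sd i * Phi (Ss i) (Xs i)).trace * (Sd j * Phi (Ss j) (Xs j)).trace) := by
  set P : (k : Fin r) → Matrix (Fin (ns k)) (Fin (ns k)) ℝ := fun l => Phi (Ss l) (Xs l) with hP
  have h1 : ∀ l, Ss l * (Ss l)⁻¹ = 1 :=
    fun l => Matrix.mul_nonsing_inv _ (hSs l).det_pos.ne'.isUnit
  have h1' : ∀ l, (Ss l)⁻¹ * Ss l = 1 :=
    fun l => Matrix.nonsing_inv_mul _ (hSs l).det_pos.ne'.isUnit
  have hTS : ∀ l, (Ss l * P l).trace = 1 := fun l => trace_S_Phi (hSs l) (hXs l)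
  have hPSP : ∀ l, P l * Ss l * P l = P l := fun l => Phi_S_Phi (hSs l) (hXs l)
  have hBB : ∀ l, (Ss l * P l) * (Ss l * P l) = Ss l * P l := by
    intro l
    calc (Ss l * P l) * (Ss l * P l) = Ss l * (P l * Ss l * P l) := by noncomm_ring
      _ = Ss l * P l := by rw [hPSP l]
  have hMix : ∀ l, (Sd l * (Ss l)⁻¹) * (Ss l * P l) = Sd l * P l := by
    intro l
    calc (Sd l * (Ss l)⁻¹) * (Ss l * P l) = Sd l * (((Ss l)⁻¹ * Ss l) * P l) := by noncomm_ring
      _ = Sd l * P l := by rw [h1' l, one_mul]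
  have hMix2 : ∀ l, (Sd l * P l) * (Ss l * P l) = Sd l * P l := by
    intro l
    calc (Sd l * P l) * (Ss l * P l) = Sd l * (P l * Ss l * P l) := by noncomm_ring
      _ = Sd l * P l := by rw [hPSP l]
  have hW : ∀ k, Wmat ns Ss Sd Xs k
      = kron ns (fun l => Function.update Ss k (Sd k) l * (Ss l)⁻¹)
        - kron ns (fun l => Function.update Ss k (Sd k) l * P l) := by
    intro k
    rw [Wmat, Q_eq_kron Ss hSs Xs, mul_sub, kron_mul, kron_mul]
  refine ⟨?_, ?_, ?_⟩
  · -- part (i)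
    intro k
    rw [hW k, Matrix.trace_sub]
    simp only [trace_kron]
    have eA : ∏ l, (Function.update Ss k (Sd k) l * (Ss l)⁻¹).trace
        = (Sd k * (Ss k)⁻¹).trace * ∏ l ∈ Finset.univ.erase k, (ns l : ℝ) := by
      rw [prod_split_one k _ (fun l => (ns l : ℝ)) (fun l hl => by
        beta_reduce
        rw [Function.update_of_ne (Finset.ne_of_mem_erase hl), h1 l, Matrix.trace_one]
        simp)]
      beta_reduce
      rw [Function.update_self]
    have eB : ∏ l, (Function.update Ss k (Sd k) l * P l).trace
        = (Sd k * P k).trace * ∏ l ∈ Finset.univ.erase k, (1 : ℝ) := by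
      rw [prod_split_one k _ (fun _ => (1 : ℝ)) (fun l hl => by
        beta_reduce
        rw [Function.update_of_ne (Finset.ne_of_mem_erase hl)]
        exact hTS l)]
      beta_reduce
      rw [Function.update_self]
    rw [eA, eB, Finset.prod_const_one, mul_one]
    push_cast
    ring
  · -- part (ii)
    intro k
    have expand : ∀ A B : Matrix ((k : Fin r) → Fin (ns k)) ((k : Fin r) → Fin (ns k)) ℝ,
        (A - B) * (A - B) = A * A - A * B - B * A + B * B := by intros; noncomm_ring
    rw [hW k, expand]
    simp only [Matrix.trace_add, Matrix.trace_sub, kron_mul, trace_kron]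
    have e1 : ∏ l, ((Function.update Ss k (Sd k) l * (Ss l)⁻¹)
          * (Function.update Ss k (Sd k) l * (Ss l)⁻¹)).trace
        = (Sd k * (Ss k)⁻¹ * (Sd k * (Ss k)⁻¹)).trace * ∏ l ∈ Finset.univ.erase k, (ns l : ℝ) := by
      rw [prod_split_one k _ (fun l => (ns l : ℝ)) (fun l hl => by
        beta_reduce
        rw [Function.update_of_ne (Finset.ne_of_mem_erase hl), h1 l, one_mul, Matrix.trace_one]
        simp)]
      beta_reduce
      rw [Function.update_self]
    have e2 : ∏ l, ((Function.update Ss k (Sd k) l * (Ss l)⁻¹)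
          * (Function.update Ss k (Sd k) l * P l)).trace
        = (Sd k * (Ss k)⁻¹ * (Sd k * P k)).trace * ∏ l ∈ Finset.univ.erase k, (1 : ℝ) := by
      rw [prod_split_one k _ (fun _ => (1 : ℝ)) (fun l hl => by
        beta_reduce
        rw [Function.update_of_ne (Finset.ne_of_mem_erase hl), h1 l, one_mul]
        exact hTS l)]
      beta_reduce
      rw [Function.update_self]
    have e3 : ∏ l, ((Function.update Ss k (Sd k) l * P l)
          * (Function.update Ss k (Sd k) l * (Ss l)⁻¹)).trace
        = (Sd k * (Ss k)⁻¹ * (Sd k * P k)).trace * ∏ l ∈ Finset.univ.erase k, (1 : ℝ) := by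
      rw [prod_split_one k _ (fun _ => (1 : ℝ)) (fun l hl => by
        beta_reduce
        rw [Function.update_of_ne (Finset.ne_of_mem_erase hl), h1 l, mul_one]
        exact hTS l)]
      beta_reduce
      rw [Function.update_self, Matrix.trace_mul_comm]
    have e4 : ∏ l, ((Function.update Ss k (Sd k) l * P l)
          * (Function.update Ss k (Sd k) l * P l)).trace
        = (Sd k * P k * (Sd k * P k)).trace * ∏ l ∈ Finset.univ.erase k, (1 : ℝ) := by
      rw [prod_split_one k _ (fun _ => (1 : ℝ)) (fun l hl => by
        beta_reduce
        rw [Function.update_of_ne (Finset.ne_of_mem_erase hl), hBB l]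
        exact hTS l)]
      beta_reduce
      rw [Function.update_self]
    rw [e1, e2, e3, e4, Finset.prod_const_one, mul_one]
    have hassoc : Sd k * (Ss k)⁻¹ * (Sd k * P k) = Sd k * (Ss k)⁻¹ * Sd k * P k := by
      noncomm_ring
    rw [hassoc]
    push_cast
    ring
  · -- part (iii)
    intro i j hij
    have expand2 : ∀ A B C D : Matrix ((k : Fin r) → Fin (ns k)) ((k : Fin r) → Fin (ns k)) ℝ,
        (A - B) * (C - D) = A * C - A * D - B * C + B * D := by intros; noncomm_ring
    rw [hW i, hW j, expand2]
    simp only [Matrix.trace_add, Matrix.trace_sub, kron_mul, trace_kron]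
    have t1 : ∏ l, ((Function.update Ss i (Sd i) l * (Ss l)⁻¹)
          * (Function.update Ss j (Sd j) l * (Ss l)⁻¹)).trace
        = (Sd i * (Ss i)⁻¹).trace * ((Sd j * (Ss j)⁻¹).trace
            * ∏ l ∈ (Finset.univ.erase i).erase j, (ns l : ℝ)) := by
      rw [prod_split_two i j hij _ (fun l => (ns l : ℝ)) (fun l hl => by
        beta_reduce
        have hli : l ≠ i := Finset.ne_of_mem_erase (Finset.mem_of_mem_erase hl)
        have hlj : l ≠ j := Finset.ne_of_mem_erase hl
        rw [Function.update_of_ne hli, Function.update_of_ne hlj, h1 l, one_mul,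
          Matrix.trace_one]
        simp)]
      beta_reduce
      rw [Function.update_self, Function.update_of_ne hij, Function.update_self,
        Function.update_of_ne hij.symm, h1 i, mul_one, h1 j, one_mul]
    have t2 : ∏ l, ((Function.update Ss i (Sd i) l * (Ss l)⁻¹)
          * (Function.update Ss j (Sd j) l * P l)).trace
        = (Sd i * P i).trace * ((Sd j * P j).trace
            * ∏ l ∈ (Finset.univ.erase i).erase j, (1 : ℝ)) := by
      rw [prod_split_two i j hij _ (fun _ => (1 : ℝ)) (fun l hl => by
        beta_reduce
        have hli : l ≠ i := Finset.ne_of_mem_erase (Finset.mem_of_mem_erase hl)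
        have hlj : l ≠ j := Finset.ne_of_mem_erase hl
        rw [Function.update_of_ne hli, Function.update_of_ne hlj, h1 l, one_mul]
        exact hTS l)]
      beta_reduce
      rw [Function.update_self, Function.update_of_ne hij, Function.update_self,
        Function.update_of_ne hij.symm, hMix i, h1 j, one_mul]
    have t3 : ∏ l, ((Function.update Ss i (Sd i) l * P l)
          * (Function.update Ss j (Sd j) l * (Ss l)⁻¹)).trace
        = (Sd i * P i).trace * ((Sd j * P j).trace
            * ∏ l ∈ (Finset.univ.erase i).erase j, (1 : ℝ)) := by
      rw [prod_split_two i j hij _ (fun _ => (1 : ℝ)) (fun l hl => by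
        beta_reduce
        have hli : l ≠ i := Finset.ne_of_mem_erase (Finset.mem_of_mem_erase hl)
        have hlj : l ≠ j := Finset.ne_of_mem_erase hl
        rw [Function.update_of_ne hli, Function.update_of_ne hlj, h1 l, mul_one]
        exact hTS l)]
      beta_reduce
      rw [Function.update_self, Function.update_of_ne hij, Function.update_self,
        Function.update_of_ne hij.symm, h1 i, mul_one,
        Matrix.trace_mul_comm (Ss j * P j), hMix j]
    have t4 : ∏ l, ((Function.update Ss i (Sd i) l * P l)
          * (Function.update Ss j (Sd j) l * P l)).trace
        = (Sd i * P i).trace * ((Sd j * P j).trace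
            * ∏ l ∈ (Finset.univ.erase i).erase j, (1 : ℝ)) := by
      rw [prod_split_two i j hij _ (fun _ => (1 : ℝ)) (fun l hl => by
        beta_reduce
        have hli : l ≠ i := Finset.ne_of_mem_erase (Finset.mem_of_mem_erase hl)
        have hlj : l ≠ j := Finset.ne_of_mem_erase hl
        rw [Function.update_of_ne hli, Function.update_of_ne hlj, hBB l]
        exact hTS l)]
      beta_reduce
      rw [Function.update_self, Function.update_of_ne hij, Function.update_self,
        Function.update_of_ne hij.symm, hMix2 i,
        Matrix.trace_mul_comm (Ss j * P j), hMix2 j]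
    rw [t1, t2, t3, t4, Finset.prod_const_one, mul_one]
    push_cast
    ring
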